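/- arXiv:2211.17169 — 8 statements merged into one kernel-verified Lean document; each statement's English description precedes it below -/
import Mathlib

section
/- The modified fractional aggregation function satisfies individually rational aversion to enemies: for any finite coalition C containing agent i with |C| ≥ 2, any j ∈ C \ {i} with u_i(j) < 0, if MF_i(C, u_i) ≥ 0 then MF_i(C \ {j}, u_i) ≥ MF_i(C, u_i). -/
/-- Modified fractional aggregation of coalition `C` for agent `i` under utilities `u`. -/
noncomputable def MF {N : Type*} [DecidableEq N] (i : N) (C : Finset N) (u : N → ℚ) : ℚ :=
  if 2 ≤ C.card then (∑ k ∈ C.erase i, u k) / ((C.card : ℚ) - 1) else 0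

/-- The modified fractional aggregation function satisfies individually rational
aversion to enemies. -/
theorem stmt_2 {N : Type*} [DecidableEq N] (i : N) (C : Finset N) (hi : i ∈ C)
    (hC : 2 ≤ C.card) (j : N) (hj : j ∈ C) (hji : j ≠ i) (u : N → ℚ)
    (hu : u j < 0) (hIR : 0 ≤ MF i C u) :
    MF i C u ≤ MF i (C.erase j) u := by
  have hjci : j ∈ C.erase i := Finset.mem_erase.mpr ⟨hji, hj⟩
  set S := ∑ k ∈ C.erase i, u k with hS
  have hsum : ∑ k ∈ (C.erase j).erase i, u k = S - u j := by
    rw [Finset.erase_right_comm, Finset.sum_erase_eq_sub hjci]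
  have hcard : (C.erase j).card = C.card - 1 := Finset.card_erase_of_mem hj
  have hMF : MF i C u = S / ((C.card : ℚ) - 1) := by simp [MF, hC, hS]
  rcases eq_or_lt_of_le hC with h2 | h3
  · -- card = 2 : contradiction
    exfalso
    have hci : (C.erase i).card = 1 := by
      rw [Finset.card_erase_of_mem hi, ← h2]
    have : C.erase i = {j} := Finset.eq_singleton_iff_unique_mem.mpr
      ⟨hjci, fun x hx => by
        rcases Finset.card_eq_one.mp hci with ⟨a, ha⟩
        rw [ha] at hx hjci
        simp at hx hjci
        rw [hx, hjci]⟩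
    have hSv : S = u j := by rw [hS, this, Finset.sum_singleton]
    rw [hMF, ← h2] at hIR
    norm_num [hSv] at hIR
    linarith
  · have h3 : 3 ≤ C.card := h3
    have hc2 : 2 ≤ (C.erase j).card := by omega
    have hMF2 : MF i (C.erase j) u = (S - u j) / ((C.card : ℚ) - 2) := by
      rw [MF, if_pos hc2, hsum, hcard]
      congr 1
      have : (1:ℕ) ≤ C.card := by omega
      push_cast [this]
      ring
    have hn1 : (0:ℚ) < (C.card : ℚ) - 1 := by
      have : (2:ℚ) ≤ (C.card : ℚ) := by exact_mod_cast hC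
      linarith
    have hn2 : (0:ℚ) < (C.card : ℚ) - 2 := by
      have : (3:ℚ) ≤ (C.card : ℚ) := by exact_mod_cast h3
      linarith
    have hSnn : 0 ≤ S := by
      rw [hMF] at hIR
      exact (div_nonneg_iff.mp hIR).resolve_right (fun h => absurd h.2 (not_le.mpr hn1)) |>.1
    rw [hMF, hMF2, div_le_div_iff₀ hn1 hn2]
    nlinarith [hn1, hu, hSnn]
end

section
/- The modified fractional aggregation function satisfies enemy domination: for every utility function u_i: N → ℚ (N finite) and every agent j ≠ i, there exists a constant c such that for every utility function u_i' with u_i'(k) ≤ u_i(k) for all k and u_i'(j) ≤ c, and every coalition C with i, j ∈ C, it holds that MF_i(C, u_i') < 0 = MF_i({i}, u_i'). -/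
/-- The modified fractional aggregation function satisfies enemy domination:
for every utility function `u` and agent `j ≠ i` there is a constant `c` such that
whenever all utilities are at most their values in `u` and the utility for `j` is
at most `c`, every coalition containing both `i` and `j` is strictly worse for `i`
than the singleton `{i}` (which has value `0`). -/
theorem stmt_7 {N : Type*} [Fintype N] [DecidableEq N] (i : N) (u : N → ℚ)
    (j : N) (hji : j ≠ i) :
    ∃ c : ℚ, ∀ u' : N → ℚ, (∀ k, u' k ≤ u k) → u' j ≤ c →
      ∀ C : Finset N, i ∈ C → j ∈ C →
        MF i C u' < MF i ({i} : Finset N) u' := by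
  refine ⟨-(∑ k, max (u k) 0) - 1, ?_⟩
  intro u' hu hj C hiC hjC
  have hcard : 2 ≤ C.card := by
    have hsub : ({j, i} : Finset N) ⊆ C := by
      intro x hx
      simp only [Finset.mem_insert, Finset.mem_singleton] at hx
      rcases hx with rfl | rfl <;> assumption
    have h2 : ({j, i} : Finset N).card = 2 := by
      rw [Finset.card_insert_of_notMem (by simpa using hji), Finset.card_singleton]
    have := Finset.card_le_card hsub
    omega
  have hsingle : MF i ({i} : Finset N) u' = 0 := by
    simp [MF]
  rw [hsingle, MF, if_pos hcard]
  apply div_neg_of_neg_of_pos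
  · have hjE : j ∈ C.erase i := Finset.mem_erase.mpr ⟨hji, hjC⟩
    rw [← Finset.add_sum_erase _ _ hjE]
    have h1 : ∑ k ∈ (C.erase i).erase j, u' k ≤ ∑ k, max (u k) 0 := by
      calc ∑ k ∈ (C.erase i).erase j, u' k
          ≤ ∑ k ∈ (C.erase i).erase j, max (u k) 0 :=
            Finset.sum_le_sum (fun k _ => le_trans (hu k) (le_max_left _ _))
        _ ≤ ∑ k, max (u k) 0 :=
            Finset.sum_le_sum_of_subset_of_nonneg (Finset.subset_univ _)
              (fun k _ _ => le_max_right _ _)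
    linarith
  · have : (2 : ℚ) ≤ (C.card : ℚ) := by exact_mod_cast hcard
    linarith
end

section
/- The modified fractional aggregation function satisfies single friend desire: for any finite coalition C ∋ i, agent j ∈ C \ {i}, and utility function u_i with u_i(j) > 0 and u_i(k) ≤ 0 for all k ∈ C \ {i, j}, it holds that MF_i(C, u_i) > MF_i(C \ {j}, u_i). -/
/-- The modified fractional aggregation function satisfies single friend desire:
a coalition containing exactly one friend is strictly preferred to the same
coalition without that friend. -/
theorem stmt_10 {N : Type*} [DecidableEq N] (i : N) (C : Finset N) (hi : i ∈ C)
    (j : N) (hj : j ∈ C) (hji : j ≠ i) (u : N → ℚ)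
    (hpos : 0 < u j) (hnonpos : ∀ k ∈ C, k ≠ i → k ≠ j → u k ≤ 0) :
    MF i (C.erase j) u < MF i C u := by
  have h2 : 2 ≤ C.card := Finset.one_lt_card.mpr ⟨j, hj, i, hi, hji⟩
  have hS' : ∑ k ∈ (C.erase i).erase j, u k ≤ 0 := by
    apply Finset.sum_nonpos
    intro k hk
    rcases Finset.mem_erase.mp hk with ⟨hkj, hk'⟩
    rcases Finset.mem_erase.mp hk' with ⟨hki, hkC⟩
    exact hnonpos k hkC hki hkj
  have hsum : ∑ k ∈ C.erase i, u k = ∑ k ∈ (C.erase i).erase j, u k + u j :=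
    (Finset.sum_erase_add _ _ (Finset.mem_erase.mpr ⟨hji, hj⟩)).symm
  rw [MF, MF, if_pos h2]
  have hcard : (C.erase j).card = C.card - 1 := Finset.card_erase_of_mem hj
  by_cases h3 : 2 ≤ (C.erase j).card
  · rw [if_pos h3, Finset.erase_right_comm]
    have hn : 3 ≤ C.card := by omega
    have hc : ((C.erase j).card : ℚ) = (C.card : ℚ) - 1 := by
      rw [hcard, Nat.cast_sub (by omega)]; norm_num
    have hn1 : (0:ℚ) < (C.card : ℚ) - 1 := by
      have : (3:ℚ) ≤ (C.card : ℚ) := by exact_mod_cast hn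
      linarith
    have hn2 : (0:ℚ) < (C.card : ℚ) - 1 - 1 := by
      have : (3:ℚ) ≤ (C.card : ℚ) := by exact_mod_cast hn
      linarith
    rw [hc, hsum, div_lt_div_iff₀ hn2 hn1]
    nlinarith [hS', hpos, hn1, hn2]
  · rw [if_neg h3]
    have hc2 : C.card = 2 := by omega
    have hempty : (C.erase i).erase j = ∅ := by
      apply Finset.card_eq_zero.mp
      rw [Finset.card_erase_of_mem (Finset.mem_erase.mpr ⟨hji, hj⟩),
        Finset.card_erase_of_mem hi, hc2]
    rw [hsum, hempty, Finset.sum_empty, hc2]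
    norm_num
    exact hpos
end

section
/- There exists a 3-agent additively separable hedonic game with appreciative agents admitting an infinite sequence of individually rational core deviations. Concretely, with N = {a,b,c}, initial utilities u_a(b)=u_b(c)=u_c(a)=4 and u_a(c)=u_b(a)=u_c(b)=1, the cyclic sequence of pairwise coalition formations {a,b}, {b,c}, {a,c}, {a,b}, ... starting from the singleton partition is an infinite sequence of core deviations: at each step, both deviating agents strictly prefer the new pair coalition to their current coalition with respect to their current (appreciation-updated) additively separable utilities. -/
/-- The coalition performing a (group) core deviation at step `t ≥ 1`:
`{a,b}` at steps `≡ 1`, `{b,c}` at steps `≡ 2`, `{a,c}` at steps `≡ 0 (mod 3)`,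
where `a = 0`, `b = 1`, `c = 2`. -/
def devCoal (t : ℕ) : Finset (Fin 3) :=
  if t % 3 = 1 then {0, 1} else if t % 3 = 2 then {1, 2} else {0, 2}

/-- The partition after `t` steps, given by the coalition of each agent:
initially all agents are in singletons, and after step `t ≥ 1` the deviating
pair is together and the remaining agent is alone. -/
def coalOf (t : ℕ) (i : Fin 3) : Finset (Fin 3) :=
  if t = 0 then {i} else if i ∈ devCoal t then devCoal t else {i}

/-- Initial utilities: `u_a(b) = u_b(c) = u_c(a) = 4` and `u_a(c) = u_b(a) = u_c(b) = 1`. -/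
def u0 : Fin 3 → Fin 3 → ℚ := ![![0, 4, 1], ![1, 0, 4], ![4, 1, 0]]

/-- Utilities evolving by appreciation: whenever a coalition `D` forms, each member
of `D` increases her utility for every other member of `D` by `1`. -/
def util : ℕ → Fin 3 → Fin 3 → ℚ
  | 0 => u0
  | (t + 1) => fun i j =>
      if i ∈ devCoal (t + 1) ∧ j ∈ devCoal (t + 1) ∧ i ≠ j then util t i j + 1
      else util t i j

def cnt (t : ℕ) : Fin 3 → Fin 3 → ℕ :=
  ![![0, (t+2)/3, t/3], ![(t+2)/3, 0, (t+1)/3], ![t/3, (t+1)/3, 0]]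

lemma util_eq (t : ℕ) : ∀ i j, util t i j = u0 i j + (cnt t i j : ℚ) := by
  induction t with
  | zero =>
    intro i j
    fin_cases i <;> fin_cases j <;>
      simp [util, cnt, Matrix.vecHead, Matrix.vecTail]
  | succ t ih =>
    intro i j
    have h3 : t % 3 = 0 ∨ t % 3 = 1 ∨ t % 3 = 2 := by omega
    rcases h3 with h | h | h
    · have hd : devCoal (t+1) = {0, 1} := by
        simp [devCoal, show (t+1) % 3 = 1 by omega]
      fin_cases i <;> fin_cases j <;>
        simp [util, hd, ih, cnt, u0] <;> norm_cast <;> omega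
    · have hd : devCoal (t+1) = {1, 2} := by
        simp [devCoal, show (t+1) % 3 = 2 by omega]
      fin_cases i <;> fin_cases j <;>
        simp [util, hd, ih, cnt, u0] <;> norm_cast <;> omega
    · have hd : devCoal (t+1) = {0, 2} := by
        simp [devCoal, show (t+1) % 3 = 0 by omega, show (t+1)%3 ≠ 1 by omega, show (t+1)%3 ≠ 2 by omega]
      fin_cases i <;> fin_cases j <;>
        simp [util, hd, ih, cnt, u0] <;> norm_cast <;> omega

/-- The cyclic sequence `{a,b}, {b,c}, {a,c}, {a,b}, …` of pairwise coalition
formations, starting from the singleton partition, is an infinite sequence of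
individually rational core deviations for the appreciative agents of this
3-agent additively separable hedonic game: at every step each deviating agent
strictly prefers the new pair coalition to her current coalition with respect
to her current (appreciation-updated) additively separable utilities, and the
new coalition is individually rational for her. -/
theorem stmt_11 :
    ∀ t : ℕ, ∀ i ∈ devCoal (t + 1),
      (∑ j ∈ (coalOf t i).erase i, util t i j) <
        (∑ j ∈ (devCoal (t + 1)).erase i, util t i j) ∧
      0 ≤ ∑ j ∈ (devCoal (t + 1)).erase i, util t i j := by
  intro t i hi
  have h3 : t % 3 = 0 ∨ t % 3 = 1 ∨ t % 3 = 2 := by omega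
  rcases h3 with h | h | h
  · have hd1 : devCoal (t+1) = {0, 1} := by
      simp [devCoal, show (t+1) % 3 = 1 by omega]
    rw [hd1] at hi ⊢
    rcases Nat.eq_zero_or_pos t with ht | ht
    · subst ht
      fin_cases hi <;> norm_num [coalOf, devCoal, util, u0]
    · have hd0 : devCoal t = {0, 2} := by
        simp [devCoal, show t % 3 ≠ 1 by omega, show t % 3 ≠ 2 by omega]
      have e1 : (t+1)/3 = t/3 := by omega
      have e2 : (t+2)/3 = t/3 := by omega
      fin_cases hi <;>
        simp [coalOf, hd0, show t ≠ 0 by omega, util_eq, cnt, u0, e1, e2] <;>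
        (try constructor) <;> first | positivity | linarith [Nat.cast_nonneg (α := ℚ) (t/3)]
  · have hd1 : devCoal (t+1) = {1, 2} := by
      simp [devCoal, show (t+1) % 3 = 2 by omega]
    rw [hd1] at hi ⊢
    have hd0 : devCoal t = {0, 1} := by
      simp [devCoal, show t % 3 = 1 by omega]
    have e1 : (t+1)/3 = t/3 := by omega
    have e2 : (t+2)/3 = t/3 + 1 := by omega
    fin_cases hi <;>
      simp [coalOf, hd0, show t ≠ 0 by omega, util_eq, cnt, u0, e1, e2] <;>
      (try constructor) <;> first | positivity | (push_cast; linarith [Nat.cast_nonneg (α := ℚ) (t/3)])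
  · have hd1 : devCoal (t+1) = {0, 2} := by
      simp [devCoal, show (t+1) % 3 = 0 by omega, show (t+1) % 3 ≠ 1 by omega, show (t+1) % 3 ≠ 2 by omega]
    rw [hd1] at hi ⊢
    have hd0 : devCoal t = {1, 2} := by
      simp [devCoal, show t % 3 = 2 by omega, show t % 3 ≠ 1 by omega]
    have e1 : (t+1)/3 = t/3 + 1 := by omega
    have e2 : (t+2)/3 = t/3 + 1 := by omega
    fin_cases hi <;>
      simp [coalOf, hd0, show t ≠ 0 by omega, util_eq, cnt, u0, e1, e2] <;>
      (try constructor) <;> first | positivity | (push_cast; linarith [Nat.cast_nonneg (α := ℚ) (t/3)])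
end

section
/- In any hedonic game with resentful agents whose aggregation functions satisfy aversion to enemies, every infinite sequence of Nash deviations contains only finitely many deviations that are not contractual Nash deviations. -/
/-- In any hedonic game with resentful agents whose aggregation functions satisfy
aversion to enemies, every infinite sequence of Nash deviations contains only
finitely many deviations that are not contractual Nash deviations.

The data is: a finite agent set `N`, aggregation functions `A i`, a sequence of
partitions given by the coalition `π t i` of each agent `i` at time `t`, evolving
at each step `t + 1` by a single-agent deviation of agent `dev (t + 1)` (every
non-deviator either stays with the deviator's new coalition or keeps her old
coalition minus the deviator; the deviator moves to a singleton or joins an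
existing coalition of the current partition), utilities `u t i` evolving by
resent, and every deviation being a Nash deviation.  The conclusion: the set of
steps at which some abandoned agent is made strictly worse (i.e. the deviation
is not a CNS deviation) is finite. -/
theorem stmt_14 {N : Type*} [Fintype N] [DecidableEq N]
    (A : N → Finset N → (N → ℚ) → ℚ)
    (hATE : ∀ (i : N) (C : Finset N) (u : N → ℚ) (j : N),
      j ∈ C → j ≠ i → u j < 0 → A i C u ≤ A i (C.erase j) u)
    (π : ℕ → N → Finset N) (u : ℕ → N → N → ℚ) (dev : ℕ → N)
    (hmem : ∀ t i, i ∈ π t i)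
    (hpart : ∀ t i j, j ∈ π t i → π t j = π t i)
    (hdev : ∀ t i, i ≠ dev (t + 1) →
      π (t + 1) i =
        if i ∈ π (t + 1) (dev (t + 1)) then π (t + 1) (dev (t + 1))
        else (π t i).erase (dev (t + 1)))
    (hjoin : ∀ t, π (t + 1) (dev (t + 1)) = {dev (t + 1)} ∨
      ∃ i, i ≠ dev (t + 1) ∧ dev (t + 1) ∉ π t i ∧
        π (t + 1) (dev (t + 1)) = insert (dev (t + 1)) (π t i))
    (hres : ∀ t i j, u (t + 1) i j =
      if i ≠ dev (t + 1) ∧ j = dev (t + 1) ∧ j ∈ π t i then u t i j - 1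
      else u t i j)
    (hNS : ∀ t, A (dev (t + 1)) (π t (dev (t + 1))) (u t (dev (t + 1))) <
      A (dev (t + 1)) (π (t + 1) (dev (t + 1))) (u t (dev (t + 1)))) :
    {t : ℕ | ∃ i ∈ π t (dev (t + 1)), i ≠ dev (t + 1) ∧
      A i (π (t + 1) i) (u t i) < A i (π t i) (u t i)}.Finite := by

  classical
  set S : N → N → Set ℕ := fun i k =>
    {t | dev (t+1) = k ∧ i ∈ π t k ∧ i ≠ k ∧ 0 ≤ u t i k} with hSdef
  -- utilities never increase
  have hmono : ∀ i k t, u (t+1) i k ≤ u t i k := by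
    intro i k t
    rw [hres]
    split <;> linarith
  have hmono' : ∀ i k a b, a ≤ b → u b i k ≤ u a i k := by
    intro i k a b hab
    induction b with
    | zero => simp_all
    | succ n ih =>
      rcases Nat.lt_or_ge a (n+1) with h | h
      · exact le_trans (hmono i k n) (ih (Nat.lt_succ_iff.mp h))
      · have : a = n + 1 := le_antisymm hab h
        simp [this]
  have hdec : ∀ i k t, t ∈ S i k → u (t+1) i k = u t i k - 1 := by
    intro i k t ht
    obtain ⟨hd, hik, hne, hu⟩ := ht
    have hki : k ∈ π t i := by
      rw [hpart t k i hik]; exact hmem t k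
    rw [hres, if_pos ⟨by rw [hd]; exact hne, hd.symm, hki⟩]
  -- each S i k is finite
  have hSfin : ∀ i k, (S i k).Finite := by
    intro i k
    by_contra hfin
    have hinf : (S i k).Infinite := hfin
    set n : ℕ := ⌈u 0 i k⌉₊ + 1 with hn
    obtain ⟨T, hTsub, hTcard⟩ := hinf.exists_subset_card_eq n
    set m : ℕ := T.sup id + 1 with hm
    have hTm : T ⊆ Finset.range m := by
      intro s hs
      exact Finset.mem_range.mpr (Nat.lt_succ_of_le (Finset.le_sup (f := id) hs))
    -- key bound by induction
    have hbound : ∀ M, u M i k ≤ u 0 i k -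
        ((Finset.range M).filter (· ∈ S i k)).card := by
      intro M
      induction M with
      | zero => simp
      | succ M ih =>
        rw [Finset.range_add_one, Finset.filter_insert]
        by_cases hM : M ∈ S i k
        · rw [if_pos hM, Finset.card_insert_of_notMem (by simp), hdec i k M hM]
          push_cast
          linarith
        · rw [if_neg hM]
          exact le_trans (hmono i k M) ih
    have hcard : n ≤ ((Finset.range m).filter (· ∈ S i k)).card := by
      rw [← hTcard]
      apply Finset.card_le_card
      intro s hs
      exact Finset.mem_filter.mpr ⟨hTm hs, hTsub hs⟩
    have hneg : u m i k < 0 := by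
      have := hbound m
      have hceil : u 0 i k ≤ (⌈u 0 i k⌉₊ : ℚ) := Nat.le_ceil _
      have : u m i k ≤ u 0 i k - n := by
        have := hbound m
        have : ((n : ℚ)) ≤ (((Finset.range m).filter (· ∈ S i k)).card : ℚ) := by
          exact_mod_cast hcard
        linarith [hbound m]
      rw [hn] at this
      push_cast at this
      linarith
    obtain ⟨s, hsS, hms⟩ := hinf.exists_gt m
    have : u s i k ≤ u m i k := hmono' i k m s (le_of_lt hms)
    have h0 : 0 ≤ u s i k := hsS.2.2.2
    linarith
  -- the bad set is contained in the union of the S i k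
  have hsub : {t : ℕ | ∃ i ∈ π t (dev (t + 1)), i ≠ dev (t + 1) ∧
      A i (π (t + 1) i) (u t i) < A i (π t i) (u t i)} ⊆
      ⋃ p : N × N, S p.1 p.2 := by
    intro t ht
    obtain ⟨i, hiC, hne, hA⟩ := ht
    set d := dev (t+1) with hd
    refine Set.mem_iUnion.mpr ⟨(i, d), rfl, hiC, hne, ?_⟩
    by_contra hu
    push_neg at hu
    -- π (t+1) i = (π t i).erase d
    have hpi : π t i = π t d := hpart t d i hiC
    have hdi : d ∈ π t i := by rw [hpi]; exact hmem t d
    have hnotin : i ∉ π (t+1) d := by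
      intro hin
      rcases hjoin t with hsing | ⟨j, hjne, hjd, hjins⟩
      · rw [hsing] at hin
        exact hne (Finset.mem_singleton.mp hin)
      · rw [hjins] at hin
        rcases Finset.mem_insert.mp hin with h | h
        · exact hne h
        · have := hpart t j i h
          rw [← this] at hjd
          exact hjd hdi
    have hπ1 : π (t+1) i = (π t i).erase d := by
      rw [hdev t i hne, if_neg hnotin]
    have := hATE i (π t i) (u t i) d hdi (fun h => hne h.symm) hu
    rw [← hπ1] at this
    linarith
  exact Set.Finite.subset (Set.finite_iUnion (fun p : N × N => hSfin p.1 p.2)) hsub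
end

section
/- In any additively separable hedonic game with appreciative agents, every infinite sequence of Nash deviations contains only finitely many deviations that are not individual-stability deviations. -/
/-- In any additively separable hedonic game with appreciative agents, every
infinite sequence of Nash deviations contains only finitely many deviations
that are not individual-stability deviations.

The data is: a finite agent set `N`, a sequence of partitions given by the
coalition `π t i` of each agent `i` at time `t`, evolving at each step `t + 1`
by a single-agent deviation of agent `dev (t + 1)` (as before the deviator
moves to a singleton or joins an existing coalition of the current partition),
utilities `u t i` evolving by appreciation (members of the joined coalition
increase their utility for the joining deviator by `1`), additive aggregation
`Σ_{j ∈ C \ {i}} u i j`, and every deviation being a Nash deviation.  The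
conclusion: the set of steps at which some member of the joined coalition is
made strictly worse (i.e. the deviation is not an IS deviation) is finite. -/
theorem stmt_15 {N : Type*} [Fintype N] [DecidableEq N]
    (π : ℕ → N → Finset N) (u : ℕ → N → N → ℚ) (dev : ℕ → N)
    (hmem : ∀ t i, i ∈ π t i)
    (hpart : ∀ t i j, j ∈ π t i → π t j = π t i)
    (hdev : ∀ t i, i ≠ dev (t + 1) →
      π (t + 1) i =
        if i ∈ π (t + 1) (dev (t + 1)) then π (t + 1) (dev (t + 1))
        else (π t i).erase (dev (t + 1)))
    (hjoin : ∀ t, π (t + 1) (dev (t + 1)) = {dev (t + 1)} ∨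
      ∃ i, i ≠ dev (t + 1) ∧ dev (t + 1) ∉ π t i ∧
        π (t + 1) (dev (t + 1)) = insert (dev (t + 1)) (π t i))
    (happ : ∀ t i j, u (t + 1) i j =
      if i ≠ dev (t + 1) ∧ j = dev (t + 1) ∧ j ∈ π (t + 1) i then u t i j + 1
      else u t i j)
    (hNS : ∀ t,
      (∑ j ∈ (π t (dev (t + 1))).erase (dev (t + 1)), u t (dev (t + 1)) j) <
        ∑ j ∈ (π (t + 1) (dev (t + 1))).erase (dev (t + 1)), u t (dev (t + 1)) j) :
    {t : ℕ | ∃ i ∈ π (t + 1) (dev (t + 1)), i ≠ dev (t + 1) ∧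
      (∑ j ∈ (π (t + 1) i).erase i, u t i j) < ∑ j ∈ (π t i).erase i, u t i j}.Finite := by
 classical
  -- each step either increments a utility by 1 or leaves it unchanged
  have hstep : ∀ t i j, u (t+1) i j = u t i j + 1 ∨ u (t+1) i j = u t i j := by
    intro t i j
    rw [happ]
    split <;> simp
  -- per-pair "bad" sets
  have hSfin : ∀ i d : N, {t : ℕ | u t i d < 0 ∧ u (t+1) i d = u t i d + 1}.Finite := by
    intro i d
    set k : ℕ → ℕ :=
      fun t => ((Finset.range t).filter (fun s => u (s+1) i d = u s i d + 1)).card with hk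
    have hku : ∀ t, u t i d = u 0 i d + k t := by
      intro t
      induction t with
      | zero => simp [hk]
      | succ n ih =>
        by_cases hc : u (n+1) i d = u n i d + 1
        · have : k (n+1) = k n + 1 := by
            simp only [hk, Finset.range_add_one, Finset.filter_insert, if_pos hc]
            rw [Finset.card_insert_of_notMem (by simp)]
          rw [hc, ih, this]
          push_cast
          ring
        · have hu : u (n+1) i d = u n i d := (hstep n i d).resolve_left hc
          have : k (n+1) = k n := by
            simp only [hk, Finset.range_add_one, Finset.filter_insert, if_neg hc]
          rw [hu, ih, this]
    have hkmono : Monotone k := by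
      intro a b hab
      exact Finset.card_le_card (Finset.filter_subset_filter _
        (Finset.range_subset_range.mpr hab))
    have hsub : {t : ℕ | u t i d < 0 ∧ u (t+1) i d = u t i d + 1} ⊆
        k ⁻¹' ↑(Finset.range (⌈-u 0 i d⌉₊)) := by
      intro t ht
      simp only [Set.mem_preimage, Finset.coe_range, Set.mem_Iio]
      rw [Nat.lt_ceil]
      have := hku t
      have h0 : (k t : ℚ) < -u 0 i d := by linarith [ht.1]
      exact h0
    have hinj : Set.InjOn k {t : ℕ | u t i d < 0 ∧ u (t+1) i d = u t i d + 1} := by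
      have hlt : ∀ a ∈ {t : ℕ | u t i d < 0 ∧ u (t+1) i d = u t i d + 1},
          ∀ b ∈ {t : ℕ | u t i d < 0 ∧ u (t+1) i d = u t i d + 1},
          a < b → k a < k b := by
        intro a ha b _ hab
        have hka : k (a+1) = k a + 1 := by
          simp only [hk, Finset.range_add_one, Finset.filter_insert, if_pos ha.2]
          rw [Finset.card_insert_of_notMem (by simp)]
        have h2 : k (a+1) ≤ k b := hkmono (by omega)
        omega
      intro a ha b hb hab
      rcases lt_trichotomy a b with h | h | h
      · exact absurd hab (hlt a ha b hb h).ne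
      · exact h
      · exact absurd hab.symm (hlt b hb a ha h).ne
    exact Set.Finite.of_finite_image
      (((Finset.range (⌈-u 0 i d⌉₊)).finite_toSet).subset (Set.image_subset_iff.mpr hsub)) hinj
  -- the bad set is contained in the union of the per-pair sets
  apply Set.Finite.subset
    (Set.finite_iUnion (fun i : N => Set.finite_iUnion (fun d : N => hSfin i d)))
  intro t ht
  obtain ⟨i, hiC, hine, hlt⟩ := ht
  set d := dev (t+1) with hd
  simp only [Set.mem_iUnion]
  refine ⟨i, d, ?_, ?_⟩
  · -- u t i d < 0
    -- identify the coalition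
    rcases hjoin t with hsing | ⟨a, hane, hand, heq⟩
    · rw [hsing] at hiC
      simp at hiC
      exact absurd hiC hine
    · have hia : i ∈ π t a := by
        rw [heq] at hiC
        rcases Finset.mem_insert.mp hiC with h | h
        · exact absurd h hine
        · exact h
      have hπi : π t i = π t a := hpart t a i hia
      have hπ1i : π (t+1) i = π (t+1) d := by
        rw [hdev t i hine, if_pos hiC]
      have hsum : (π (t+1) i).erase i = insert d ((π t i).erase i) := by
        rw [hπ1i, heq, hπi, Finset.erase_insert_of_ne (Ne.symm hine)]
      have hdni : d ∉ (π t i).erase i := by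
        rw [hπi]
        exact fun h => hand (Finset.mem_of_mem_erase h)
      rw [hsum, Finset.sum_insert hdni] at hlt
      linarith
  · -- the increment happened
    have hdπ : d ∈ π (t+1) i := by
      rw [hdev t i hine, if_pos hiC]
      exact hmem (t+1) d
    rw [happ]
    rw [if_pos ⟨hine, rfl, hdπ⟩]
end

section
/- In any additively separable hedonic game with appreciative agents, every execution of the contractual Nash stability (CNS) dynamics converges, i.e., there is no infinite sequence of CNS deviations. -/
/-- The event that, at step `t + 1`, agent `j` is the deviator and joins the
coalition containing `i`. -/
def Ev {N : Type*} (π : ℕ → N → Finset N) (dev : ℕ → N) (i j : N) (t : ℕ) : Prop :=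
  dev (t + 1) = j ∧ i ≠ j ∧ j ∈ π (t + 1) i

/-- The event `Ev π dev i j` happens infinitely often. -/
def InfEv {N : Type*} (π : ℕ → N → Finset N) (dev : ℕ → N) (i j : N) : Prop :=
  ∀ m, ∃ t, m ≤ t ∧ Ev π dev i j t

/-- If `P a` holds but `P b` fails with `a ≤ b`, there is a flip point. -/
lemma flip_aux {P : ℕ → Prop} {a b : ℕ} (hab : a ≤ b) (ha : P a) (hb : ¬ P b) :
    ∃ r, a ≤ r ∧ P r ∧ ¬ P (r + 1) := by
  by_contra h
  push_neg at h
  have key : ∀ c, a ≤ c → P c := by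
    intro c hc
    induction c, hc using Nat.le_induction with
    | base => exact ha
    | succ n hn ih => exact h n hn ih
  exact hb (key b hab)

/-- In any additively separable hedonic game with appreciative agents, every
execution of the contractual Nash stability (CNS) dynamics converges: there is
no infinite sequence of CNS deviations.

The data is: a finite agent set `N`, a sequence of partitions given by
coalitions `π t i`, evolving at each step `t + 1` by a single-agent deviation
of `dev (t + 1)`, utilities evolving by appreciation (members of the joined
coalition increase their utility for the joining deviator by `1`), additive
aggregation, and every deviation being a CNS deviation: the deviator strictly
improves and every member of the abandoned coalition weakly improves.  The
conclusion is `False`: no such infinite execution exists. -/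
theorem stmt_17 {N : Type*} [Fintype N] [DecidableEq N]
    (π : ℕ → N → Finset N) (u : ℕ → N → N → ℚ) (dev : ℕ → N)
    (hmem : ∀ t i, i ∈ π t i)
    (hpart : ∀ t i j, j ∈ π t i → π t j = π t i)
    (hdev : ∀ t i, i ≠ dev (t + 1) →
      π (t + 1) i =
        if i ∈ π (t + 1) (dev (t + 1)) then π (t + 1) (dev (t + 1))
        else (π t i).erase (dev (t + 1)))
    (hjoin : ∀ t, π (t + 1) (dev (t + 1)) = {dev (t + 1)} ∨
      ∃ i, i ≠ dev (t + 1) ∧ dev (t + 1) ∉ π t i ∧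
        π (t + 1) (dev (t + 1)) = insert (dev (t + 1)) (π t i))
    (happ : ∀ t i j, u (t + 1) i j =
      if i ≠ dev (t + 1) ∧ j = dev (t + 1) ∧ j ∈ π (t + 1) i then u t i j + 1
      else u t i j)
    (hNS : ∀ t,
      (∑ j ∈ (π t (dev (t + 1))).erase (dev (t + 1)), u t (dev (t + 1)) j) <
        ∑ j ∈ (π (t + 1) (dev (t + 1))).erase (dev (t + 1)), u t (dev (t + 1)) j)
    (hCNS : ∀ t, ∀ i ∈ π t (dev (t + 1)), i ≠ dev (t + 1) →
      (∑ j ∈ (π t i).erase i, u t i j) ≤ ∑ j ∈ (π (t + 1) i).erase i, u t i j) :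
    False := by
  classical
  -- utility update rules
  have hupd1 : ∀ t i j, Ev π dev i j t → u (t + 1) i j = u t i j + 1 := by
    intro t i j ⟨h1, h2, h3⟩
    rw [happ, if_pos ⟨by rw [h1]; exact h2, h1.symm, h3⟩]
  have hupd0 : ∀ t i j, ¬ Ev π dev i j t → u (t + 1) i j = u t i j := by
    intro t i j h
    rw [happ, if_neg]
    rintro ⟨h1, h2, h3⟩
    exact h ⟨h2.symm, by rw [h2]; exact h1, h3⟩
  -- monotonicity of utilities
  have hmono : ∀ i j {s t : ℕ}, s ≤ t → u s i j ≤ u t i j := by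
    intro i j s t hst
    induction t, hst using Nat.le_induction with
    | base => exact le_refl _
    | succ n hn ih =>
      by_cases h : Ev π dev i j n
      · rw [hupd1 n i j h]; linarith
      · rw [hupd0 n i j h]; exact ih
  -- symmetry of coalition membership
  have hsymm : ∀ t i j, i ∈ π t j ↔ j ∈ π t i := by
    intro t i j
    constructor
    · intro h; rw [hpart t j i h]; exact hmem t j
    · intro h; rw [hpart t i j h]; exact hmem t i
  -- a member of the abandoned coalition is not in the joined coalition
  have habandon : ∀ t i, i ∈ π t (dev (t + 1)) → i ≠ dev (t + 1) →
      i ∉ π (t + 1) (dev (t + 1)) := by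
    intro t i hi hne hmem'
    rcases hjoin t with h | ⟨k, hk, hkd, h⟩
    · rw [h, Finset.mem_singleton] at hmem'; exact hne hmem'
    · rw [h, Finset.mem_insert] at hmem'
      rcases hmem' with h' | h'
      · exact hne h'
      · apply hkd
        have e1 : π t i = π t k := hpart t k i h'
        have e2 : π t i = π t (dev (t + 1)) := hpart t (dev (t + 1)) i hi
        rw [← e1, e2]
        exact hmem t _
  have hleave : ∀ t i, i ∈ π t (dev (t + 1)) → i ≠ dev (t + 1) →
      π (t + 1) i = (π t i).erase (dev (t + 1)) := by
    intro t i hi hne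
    rw [hdev t i hne, if_neg (habandon t i hi hne)]
  -- an abandoned agent values the deviator nonpositively
  have hneg : ∀ t i, i ∈ π t (dev (t + 1)) → i ≠ dev (t + 1) →
      u t i (dev (t + 1)) ≤ 0 := by
    intro t i hi hne
    have h1 := hCNS t i hi hne
    rw [hleave t i hi hne, Finset.erase_right_comm] at h1
    have hd : dev (t + 1) ∈ (π t i).erase i := by
      refine Finset.mem_erase.mpr ⟨Ne.symm hne, ?_⟩
      rw [hpart t (dev (t + 1)) i hi]
      exact hmem t _
    have h2 := Finset.add_sum_erase ((π t i).erase i) (u t i) hd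
    linarith
  -- utilities are constant in the absence of events
  have hconst : ∀ i j (s t : ℕ), s ≤ t → (∀ r, s ≤ r → ¬ Ev π dev i j r) →
      u t i j = u s i j := by
    intro i j s t hst h
    induction t, hst using Nat.le_induction with
    | base => rfl
    | succ n hn ih => rw [hupd0 n i j (h n hn), ih]
  -- infinitely many events force eventually positive utility
  have hpos : ∀ i j, InfEv π dev i j → ∃ T, ∀ t, T ≤ t → 0 < u t i j := by
    intro i j hinf
    have key : ∀ n : ℕ, ∃ T, u 0 i j + n ≤ u T i j := by
      intro n
      induction n with
      | zero => exact ⟨0, by simp⟩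
      | succ m ih =>
        obtain ⟨T, hT⟩ := ih
        obtain ⟨t, ht, he⟩ := hinf T
        refine ⟨t + 1, ?_⟩
        rw [hupd1 t i j he]
        have := hmono i j ht
        push_cast
        linarith
    obtain ⟨n, hn⟩ := exists_nat_gt (-(u 0 i j))
    obtain ⟨T, hT⟩ := key n
    exact ⟨T, fun t ht => lt_of_lt_of_le (by linarith) (hmono i j ht)⟩
  -- separation lemma
  have hsep : ∀ r i j, i ≠ j → j ∈ π r i → j ∉ π (r + 1) i →
      (dev (r + 1) = i ∧ u r j i ≤ 0) ∨ (dev (r + 1) = j ∧ u r i j ≤ 0) := by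
    intro r i j hij hin hout
    by_cases hei : dev (r + 1) = i
    · left
      refine ⟨hei, ?_⟩
      have := hneg r j (by rw [hei]; exact hin)
        (by rw [hei]; exact Ne.symm hij)
      rwa [hei] at this
    by_cases hej : dev (r + 1) = j
    · right
      refine ⟨hej, ?_⟩
      have := hneg r i (by rw [hej]; exact (hsymm r i j).mpr hin)
        (by rw [hej]; exact hij)
      rwa [hej] at this
    · exfalso
      apply hout
      have hine : i ≠ dev (r + 1) := fun h => hei h.symm
      have hd := hdev r i hine
      by_cases hmem' : i ∈ π (r + 1) (dev (r + 1))
      · rw [hd, if_pos hmem']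
        rcases hjoin r with hJ | ⟨k, hk, hkd, hJ⟩
        · rw [hJ, Finset.mem_singleton] at hmem'
          exact absurd hmem'.symm hei
        · rw [hJ] at hmem' ⊢
          rcases Finset.mem_insert.mp hmem' with h' | h'
          · exact absurd h'.symm hei
          · exact Finset.mem_insert_of_mem (by rw [← hpart r k i h']; exact hin)
      · rw [hd, if_neg hmem']
        exact Finset.mem_erase.mpr ⟨fun h => hej h.symm, hin⟩
  -- mutual exclusion: two agents cannot join each other infinitely often
  have hmutex : ∀ i j, i ≠ j → InfEv π dev i j → InfEv π dev j i → False := by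
    intro i j hij hIJ hJI
    obtain ⟨T1, h1⟩ := hpos i j hIJ
    obtain ⟨T2, h2⟩ := hpos j i hJI
    obtain ⟨t1, ht1, he1⟩ := hIJ (max T1 T2)
    obtain ⟨t2, ht2, he2⟩ := hIJ (t1 + 1)
    have hout : j ∉ π t2 i := by
      intro hmem'
      have hij' : i ∈ π (t2 + 1) (dev (t2 + 1)) := by
        rw [he2.1]; exact (hsymm _ i j).mpr he2.2.2
      rcases hjoin t2 with hJ | ⟨k, hk, hkd, hJ⟩
      · rw [hJ, Finset.mem_singleton] at hij'
        exact hij (hij'.trans he2.1)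
      · rw [hJ, Finset.mem_insert] at hij'
        rcases hij' with h' | h'
        · exact hij (h'.trans he2.1)
        · apply hkd
          rw [he2.1, ← hpart t2 k i h']
          exact hmem'
    obtain ⟨r, hr, hPr, hPn⟩ := flip_aux (P := fun r => j ∈ π r i) ht2 he1.2.2 hout
    have hrT : max T1 T2 ≤ r := le_trans ht1 (le_trans (Nat.le_succ t1) hr)
    rcases hsep r i j hij hPr hPn with ⟨-, hu⟩ | ⟨-, hu⟩
    · exact absurd hu (not_le.mpr (h2 r (le_trans (le_max_right T1 T2) hrT)))
    · exact absurd hu (not_le.mpr (h1 r (le_trans (le_max_left T1 T2) hrT)))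
  -- thresholds for each pair
  have hthresh : ∀ i j : N, ∃ T : ℕ, ∀ t, T ≤ t →
      ((InfEv π dev i j → 0 < u t i j) ∧ (¬ InfEv π dev i j → ¬ Ev π dev i j t)) := by
    intro i j
    by_cases h : InfEv π dev i j
    · obtain ⟨T, hT⟩ := hpos i j h
      exact ⟨T, fun t ht => ⟨fun _ => hT t ht, fun h' => absurd h h'⟩⟩
    · have h' := h
      unfold InfEv at h'
      push_neg at h'
      obtain ⟨m, hm⟩ := h'
      exact ⟨m, fun t ht => ⟨fun h'' => absurd h'' h, fun _ => hm t ht⟩⟩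
  choose T hT using hthresh
  set T₀ : ℕ := Finset.sup Finset.univ (fun p : N × N => T p.1 p.2) with hT₀
  have hT0 : ∀ i j, T i j ≤ T₀ := fun i j =>
    Finset.le_sup (f := fun p : N × N => T p.1 p.2) (Finset.mem_univ (i, j))
  -- pigeonhole: some agent deviates infinitely often
  have hpigeon : ∃ d : N, ∀ m, ∃ t, m ≤ t ∧ dev (t + 1) = d := by
    by_contra h
    push_neg at h
    choose f hf using h
    set M := Finset.sup Finset.univ f with hM
    exact hf (dev (M + 1)) M (Finset.le_sup (Finset.mem_univ _)) rfl
  obtain ⟨d, hd⟩ := hpigeon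
  -- strict improvement of d's coalition value at its own deviations
  have hS : ∀ t, dev (t + 1) = d →
      (∑ j ∈ (π t d).erase d, u t d j) < ∑ j ∈ (π (t + 1) d).erase d, u (t + 1) d j := by
    intro t hdv
    have h0 := hNS t
    rw [hdv] at h0
    refine lt_of_lt_of_le h0 (le_of_eq (Finset.sum_congr rfl fun j hj => ?_).symm)
    exact hupd0 t d j (fun ⟨h1, h2, h3⟩ => h2 (hdv.symm.trans h1))
  -- weak monotonicity of d's coalition value after T₀
  have hW : ∀ t, T₀ ≤ t →
      (∑ j ∈ (π t d).erase d, u t d j) ≤ ∑ j ∈ (π (t + 1) d).erase d, u (t + 1) d j := by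
    intro t ht
    by_cases hde : dev (t + 1) = d
    · exact le_of_lt (hS t hde)
    have hde' : d ≠ dev (t + 1) := fun h => hde h.symm
    by_cases hjm : d ∈ π (t + 1) (dev (t + 1))
    · -- d is in the joined coalition
      rcases hjoin t with hJ | ⟨k, hk, hkd, hJ⟩
      · rw [hJ, Finset.mem_singleton] at hjm; exact absurd hjm hde'
      · have hdk : d ∈ π t k := by
          rw [hJ, Finset.mem_insert] at hjm
          rcases hjm with h' | h'
          · exact absurd h' hde'
          · exact h'
        have hkd' : π t d = π t k := hpart t k d hdk
        have heN : dev (t + 1) ∉ π t d := by rw [hkd']; exact hkd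
        have hπd : π (t + 1) d = insert (dev (t + 1)) (π t d) := by
          rw [hdev t d hde', if_pos hjm, hJ, hkd']
        have hEv : Ev π dev d (dev (t + 1)) t :=
          ⟨rfl, hde', by rw [hπd]; exact Finset.mem_insert_self _ _⟩
        have hinf : InfEv π dev d (dev (t + 1)) := by
          by_contra hni
          exact ((hT d (dev (t + 1)) t (le_trans (hT0 d _) ht)).2 hni) hEv
        have hposu : 0 < u t d (dev (t + 1)) :=
          (hT d (dev (t + 1)) t (le_trans (hT0 d _) ht)).1 hinf
        have hnm : dev (t + 1) ∉ (π t d).erase d := fun h => heN (Finset.mem_of_mem_erase h)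
        rw [hπd, Finset.erase_insert_of_ne (fun h => hde' h.symm), Finset.sum_insert hnm,
          hupd1 t d (dev (t + 1)) hEv]
        have hsum : ∑ j ∈ (π t d).erase d, u (t + 1) d j
            = ∑ j ∈ (π t d).erase d, u t d j := by
          refine Finset.sum_congr rfl fun j hj => ?_
          refine hupd0 t d j ?_
          rintro ⟨h1, -, -⟩
          exact heN (h1 ▸ Finset.mem_of_mem_erase hj)
        rw [hsum]
        linarith
    · -- d is not in the joined coalition
      have hπd : π (t + 1) d = (π t d).erase (dev (t + 1)) := by
        rw [hdev t d hde', if_neg hjm]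
      have hu : ∀ j, u (t + 1) d j = u t d j := by
        intro j
        refine hupd0 t d j ?_
        rintro ⟨h1, -, h3⟩
        rw [hπd] at h3
        exact (Finset.mem_erase.mp h3).1 h1.symm
      have hsum : ∑ j ∈ (π (t + 1) d).erase d, u (t + 1) d j
          = ∑ j ∈ (π (t + 1) d).erase d, u t d j :=
        Finset.sum_congr rfl fun j _ => hu j
      rw [hsum]
      by_cases hmm : dev (t + 1) ∈ π t d
      · exact hCNS t d (by rw [hpart t d (dev (t + 1)) hmm]; exact hmem t d) hde'
      · rw [hπd, Finset.erase_eq_of_notMem hmm]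
  have hWmono : ∀ s t : ℕ, T₀ ≤ s → s ≤ t →
      (∑ j ∈ (π s d).erase d, u s d j) ≤ ∑ j ∈ (π t d).erase d, u t d j := by
    intro s t hTs hst
    induction t, hst using Nat.le_induction with
    | base => exact le_refl _
    | succ n hn ih => exact le_trans ih (hW n (le_trans hTs hn))
  -- the value right after a deviation of d is a sum of frozen utilities
  have hval : ∀ t, T₀ ≤ t → dev (t + 1) = d →
      (∑ j ∈ (π (t + 1) d).erase d, u (t + 1) d j)
        = ∑ j ∈ (π (t + 1) d).erase d, u T₀ d j := by
    intro t ht hdv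
    refine Finset.sum_congr rfl fun j hj => ?_
    obtain ⟨hjd, hjm⟩ := Finset.mem_erase.mp hj
    have hEv : Ev π dev j d t := ⟨hdv, hjd, (hsymm (t + 1) d j).mpr hjm⟩
    have hinf : InfEv π dev j d := by
      by_contra hni
      exact ((hT j d t (le_trans (hT0 j d) ht)).2 hni) hEv
    have hninf : ¬ InfEv π dev d j := fun h => hmutex d j (Ne.symm hjd) h hinf
    exact hconst d j T₀ (t + 1) (le_trans ht (Nat.le_succ t))
      (fun r hr => (hT d j r (le_trans (hT0 d j) hr)).2 hninf)
  -- extract an infinite sequence of deviation times of d, all ≥ T₀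
  choose nxt hnxt1 hnxt2 using hd
  set g : ℕ → ℕ := fun k => Nat.rec (nxt T₀) (fun _ p => nxt (p + 1)) k with hg
  have hg0 : T₀ ≤ g 0 := hnxt1 T₀
  have hgsucc : ∀ k, g k + 1 ≤ g (k + 1) := fun k => hnxt1 (g k + 1)
  have hgdev : ∀ k, dev (g k + 1) = d := by
    intro k
    cases k with
    | zero => exact hnxt2 T₀
    | succ m => exact hnxt2 (g m + 1)
  have hgT : ∀ k, T₀ ≤ g k := by
    intro k
    induction k with
    | zero => exact hg0
    | succ m ih => exact le_trans ih (le_trans (Nat.le_succ _) (hgsucc m))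
  -- the values after successive deviations strictly increase
  have hstrict : StrictMono (fun k => ∑ j ∈ (π (g k + 1) d).erase d, u (g k + 1) d j) := by
    refine strictMono_nat_of_lt_succ fun k => ?_
    calc (∑ j ∈ (π (g k + 1) d).erase d, u (g k + 1) d j)
        ≤ ∑ j ∈ (π (g (k + 1)) d).erase d, u (g (k + 1)) d j :=
          hWmono (g k + 1) (g (k + 1)) (le_trans (hgT k) (Nat.le_succ _)) (hgsucc k)
      _ < ∑ j ∈ (π (g (k + 1) + 1) d).erase d, u (g (k + 1) + 1) d j :=
          hS (g (k + 1)) (hgdev (k + 1))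
  -- but those values live in a finite set: contradiction
  have hrange : Set.range (fun k => ∑ j ∈ (π (g k + 1) d).erase d, u (g k + 1) d j) ⊆
      (fun C : Finset N => ∑ j ∈ C, u T₀ d j) '' Set.univ := by
    rintro x ⟨k, rfl⟩
    exact ⟨(π (g k + 1) d).erase d, trivial, (hval (g k) (hgT k) (hgdev k)).symm⟩
  have hfin : ((fun C : Finset N => ∑ j ∈ C, u T₀ d j) '' Set.univ).Finite :=
    Set.Finite.image _ Set.finite_univ
  exact Set.infinite_range_of_injective hstrict.injective (hfin.subset hrange)
end

section
/- In any hedonic game with deviator-resentful agents whose aggregation functions satisfy enemy domination, every execution of the individually rational strict-core-stability dynamics converges; in particular the individually rational core-stability and individual-stability dynamics converge. -/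
/-- In any hedonic game with deviator-resentful agents whose aggregation
functions satisfy enemy domination, every execution of the individually
rational strict-core stability (SCS) dynamics converges: there is no infinite
sequence of individually rational SCS deviations.  Since every individually
rational core-stability and individual-stability deviation is an individually
rational SCS deviation, this in particular implies convergence of the
individually rational CS and IS dynamics.

The data is: a finite agent set `N`, aggregation functions `A i` satisfying
enemy domination, a sequence of partitions given by coalitions `π t i`,
evolving at each step `t + 1` by a group deviation of the coalition `D (t + 1)`,
utilities evolving by deviator-resent (each deviator decreases her own utility
for each agent she abandons by `1`), every deviation being an SCS deviation
(every deviator weakly improves, some deviator strictly improves) that is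
individually rational for each deviator.  The conclusion is `False`. -/
theorem stmt_19 {N : Type*} [Fintype N] [DecidableEq N]
    (A : N → Finset N → (N → ℚ) → ℚ)
    (hED : ∀ (i : N) (u : N → ℚ) (j : N), j ≠ i →
      ∃ c : ℚ, ∀ u' : N → ℚ, (∀ k, u' k ≤ u k) → u' j ≤ c →
        ∀ C : Finset N, i ∈ C → j ∈ C → A i C u' < A i ({i} : Finset N) u')
    (π : ℕ → N → Finset N) (u : ℕ → N → N → ℚ) (D : ℕ → Finset N)
    (hmem : ∀ t i, i ∈ π t i)
    (hpart : ∀ t i j, j ∈ π t i → π t j = π t i)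
    (hin : ∀ t, ∀ i ∈ D (t + 1), π (t + 1) i = D (t + 1))
    (hout : ∀ t, ∀ i ∉ D (t + 1), π (t + 1) i = π t i \ D (t + 1))
    (hres : ∀ t i j, u (t + 1) i j =
      if i ∈ D (t + 1) ∧ j ∈ π t i ∧ j ∉ D (t + 1) then u t i j - 1
      else u t i j)
    (hSCSweak : ∀ t, ∀ i ∈ D (t + 1),
      A i (π t i) (u t i) ≤ A i (D (t + 1)) (u t i))
    (hSCSstrict : ∀ t, ∃ i ∈ D (t + 1),
      A i (π t i) (u t i) < A i (D (t + 1)) (u t i))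
    (hIR : ∀ t, ∀ i ∈ D (t + 1),
      A i ({i} : Finset N) (u t i) ≤ A i (D (t + 1)) (u t i)) :
    False := by
  classical
  -- utilities are nonincreasing
  have ustep : ∀ t i j, u (t + 1) i j ≤ u t i j := by
    intro t i j
    rw [hres]
    split <;> linarith
  have umono : ∀ s t i j, s ≤ t → u t i j ≤ u s i j := by
    intro s t i j h
    induction h with
    | refl => exact le_refl _
    | step h ih => exact le_trans (ustep _ i j) ih
  -- togetherness can only arise via joint deviation
  have together : ∀ t i j, j ∈ π (t + 1) i → j ∉ π t i →
      i ∈ D (t + 1) ∧ j ∈ D (t + 1) := by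
    intro t i j hj hnj
    by_cases hi : i ∈ D (t + 1)
    · rw [hin t i hi] at hj; exact ⟨hi, hj⟩
    · rw [hout t i hi] at hj
      exact absurd (Finset.mem_sdiff.mp hj).1 hnj
  have rejoin : ∀ b a i j, a ≤ b → j ∉ π a i → j ∈ π b i →
      ∃ s, a ≤ s ∧ i ∈ D (s + 1) ∧ j ∈ D (s + 1) := by
    intro b
    induction b with
    | zero =>
      intro a i j hab h1 h2
      obtain rfl : a = 0 := Nat.le_zero.mp hab
      exact absurd h2 h1
    | succ b ih =>
      intro a i j hab h1 h2
      rcases Nat.eq_or_lt_of_le hab with rfl | hlt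
      · exact absurd h2 h1
      · have hab' : a ≤ b := Nat.lt_succ_iff.mp hlt
        by_cases hjb : j ∈ π b i
        · exact ih a i j hab' h1 hjb
        · obtain ⟨hi, hj⟩ := together b i j h2 hjb
          exact ⟨b, hab', hi, hj⟩
  -- the set of abandonment times of any pair is finite
  have habfin : ∀ i j : N,
      {t : ℕ | i ∈ D (t + 1) ∧ j ∈ π t i ∧ j ∉ D (t + 1)}.Finite := by
    intro i j
    by_cases hne : j = i
    · subst hne
      have : {t : ℕ | j ∈ D (t + 1) ∧ j ∈ π t j ∧ j ∉ D (t + 1)} = ∅ := by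
        ext t; simp; tauto
      rw [this]; exact Set.finite_empty
    · by_contra hfin
      replace hfin : {t : ℕ | i ∈ D (t + 1) ∧ j ∈ π t i ∧ j ∉ D (t + 1)}.Infinite := hfin
      obtain ⟨c, hc⟩ := hED i (u 0 i) j hne
      have hblock : ∀ s, u s i j ≤ c → i ∈ D (s + 1) → j ∈ D (s + 1) → False := by
        intro s hlow hi hj
        have h1 := hc (u s i) (fun k => umono 0 s i k (Nat.zero_le s)) hlow
          (D (s + 1)) hi hj
        have h2 := hIR s i hi
        linarith
      have hdesc : ∀ n : ℕ,
          ∃ t, (i ∈ D (t + 1) ∧ j ∈ π t i ∧ j ∉ D (t + 1)) ∧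
            u t i j ≤ u 0 i j - n := by
        intro n
        induction n with
        | zero =>
          obtain ⟨t, ht⟩ := hfin.nonempty
          exact ⟨t, ht, by simpa using umono 0 t i j (Nat.zero_le t)⟩
        | succ n ih =>
          obtain ⟨t, ht, hu⟩ := ih
          obtain ⟨t', ht', hlt⟩ := hfin.exists_gt t
          refine ⟨t', ht', ?_⟩
          have h1 : u (t + 1) i j = u t i j - 1 := by
            rw [hres, if_pos ht]
          have h2 : u t' i j ≤ u (t + 1) i j := umono (t + 1) t' i j hlt
          push_cast
          push_cast at hu
          linarith
      obtain ⟨n, hn⟩ := exists_nat_ge (u 0 i j - c)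
      obtain ⟨t0, _, hlow0⟩ := hdesc n
      have hlow : u t0 i j ≤ c := by linarith
      obtain ⟨t1, ht1, h01⟩ := hfin.exists_gt t0
      obtain ⟨t2, ht2, h12⟩ := hfin.exists_gt t1
      obtain ⟨hi1, hj1, hnj1⟩ := ht1
      obtain ⟨hi2, hj2, hnj2⟩ := ht2
      have hsep : j ∉ π (t1 + 1) i := by rw [hin t1 i hi1]; exact hnj1
      obtain ⟨s, hs, hiD, hjD⟩ := rejoin t2 (t1 + 1) i j h12 hsep hj2
      exact hblock s (le_trans (umono t0 s i j (by omega)) hlow) hiD hjD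
  -- globally, abandonments stop after some time `b`
  have hSfin : {t : ℕ | ∃ i j : N,
      i ∈ D (t + 1) ∧ j ∈ π t i ∧ j ∉ D (t + 1)}.Finite := by
    have heq : {t : ℕ | ∃ i j : N, i ∈ D (t + 1) ∧ j ∈ π t i ∧ j ∉ D (t + 1)} =
        ⋃ i : N, ⋃ j : N, {t : ℕ | i ∈ D (t + 1) ∧ j ∈ π t i ∧ j ∉ D (t + 1)} := by
      ext t; simp
    rw [heq]
    exact Set.finite_iUnion fun i => Set.finite_iUnion fun j => habfin i j
  obtain ⟨b, hb⟩ := hSfin.bddAbove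
  have hnoAb : ∀ t, b < t → ∀ i j : N,
      ¬(i ∈ D (t + 1) ∧ j ∈ π t i ∧ j ∉ D (t + 1)) := by
    intro t ht i j hA
    have : t ≤ b := hb ⟨i, j, hA⟩
    omega
  -- after time `b`, coalitions only merge
  have hsub : ∀ t, b < t → ∀ i ∈ D (t + 1), π t i ⊆ D (t + 1) := by
    intro t ht i hi j hj
    by_contra hjD
    exact hnoAb t ht i j ⟨hi, hj, hjD⟩
  have hfix : ∀ t, b < t → ∀ i ∉ D (t + 1), π (t + 1) i = π t i := by
    intro t ht i hi
    rw [hout t i hi, Finset.sdiff_eq_self_iff_disjoint, Finset.disjoint_left]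
    intro j hj hjD
    have hip : i ∈ π t j := by rw [hpart t i j hj]; exact hmem t i
    exact hnoAb t ht j i ⟨hjD, hip, hi⟩
  have hcard : ∀ t, b < t → ∀ i, (π t i).card ≤ (π (t + 1) i).card := by
    intro t ht i
    by_cases hi : i ∈ D (t + 1)
    · rw [hin t i hi]; exact Finset.card_le_card (hsub t ht i hi)
    · rw [hfix t ht i hi]
  have hstrict : ∀ t, b < t → ∃ i, (π t i).card < (π (t + 1) i).card := by
    intro t ht
    obtain ⟨i, hi, hA⟩ := hSCSstrict t
    refine ⟨i, ?_⟩
    rw [hin t i hi]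
    refine Finset.card_lt_card (Finset.ssubset_iff_subset_ne.mpr
      ⟨hsub t ht i hi, ?_⟩)
    intro heq
    rw [heq] at hA
    exact lt_irrefl _ hA
  have hΦ : ∀ t, b < t →
      ∑ i : N, (π t i).card < ∑ i : N, (π (t + 1) i).card := by
    intro t ht
    obtain ⟨i0, hi0⟩ := hstrict t ht
    exact Finset.sum_lt_sum (fun i _ => hcard t ht i)
      ⟨i0, Finset.mem_univ i0, hi0⟩
  have hΦk : ∀ k : ℕ,
      ∑ i : N, (π (b + 1) i).card + k ≤ ∑ i : N, (π (b + 1 + k) i).card := by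
    intro k
    induction k with
    | zero => simp
    | succ k ih =>
      have h1 := hΦ (b + 1 + k) (by omega)
      have e : b + 1 + (k + 1) = (b + 1 + k) + 1 := by omega
      rw [e]
      omega
  have hbound : ∀ t, ∑ i : N, (π t i).card ≤ Fintype.card N * Fintype.card N := by
    intro t
    calc ∑ i : N, (π t i).card ≤ ∑ _i : N, Fintype.card N :=
          Finset.sum_le_sum fun i _ => Finset.card_le_univ _
      _ = Fintype.card N * Fintype.card N := by
          simp [Finset.sum_const, mul_comm]
  have h1 := hΦk (Fintype.card N * Fintype.card N + 1)
  have h2 := hbound (b + 1 + (Fintype.card N * Fintype.card N + 1))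
  omega
end
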